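/- Let p : X̃ → X be a covering map and Φ a semiflow on X. Then there exists a lift of Φ to X̃, i.e. a continuous map Φ̃ : ℝ≥0 × X̃ → X̃ with Φ̃(0, x̃) = x̃ and p(Φ̃(t, x̃)) = Φ(t, p(x̃)) for all t ∈ ℝ≥0 and x̃ ∈ X̃. -/

import Mathlib

open scoped NNReal
open Set Filter Topology
open Bundle

namespace Stmt9Aux

variable {X Xt : Type*} [TopologicalSpace X] [TopologicalSpace Xt]
  {p : Xt → X} {Φ : ℝ≥0 × X → X}

/-- A good lift on `[0, T] × V`. -/
def GoodLift (p : Xt → X) (Φ : ℝ≥0 × X → X) (T : ℝ≥0) (V : Set Xt)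
    (F : ℝ≥0 × Xt → Xt) : Prop :=
  ContinuousOn F (Icc 0 T ×ˢ V) ∧ (∀ x ∈ V, F (0, x) = x) ∧
    ∀ q ∈ Icc 0 T ×ˢ V, p (F q) = Φ (q.1, p q.2)

lemma GoodLift.mono {T T' : ℝ≥0} {V : Set Xt} {F} (h : GoodLift p Φ T V F)
    (hT : T' ≤ T) : GoodLift p Φ T' V F := by
  have hsub : Icc (0:ℝ≥0) T' ×ˢ V ⊆ Icc 0 T ×ˢ V :=
    prod_mono_left (Icc_subset_Icc le_rfl hT)
  exact ⟨h.1.mono hsub, h.2.1, fun q hq => h.2.2 q (hsub hq)⟩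

lemma goodLift_zero (hΦ0 : ∀ x, Φ (0, x) = x) (V : Set Xt) :
    GoodLift p Φ 0 V (fun q => q.2) := by
  refine ⟨continuous_snd.continuousOn, fun x _ => rfl, fun q hq => ?_⟩
  have h1 : q.1 = 0 := le_antisymm hq.1.2 (zero_le)
  rw [h1, hΦ0]

/-- Extension step. -/
lemma goodLift_extend (hp : IsCoveringMap p) (hΦc : Continuous Φ)
    {x₀ : Xt} {T b : ℝ≥0} (hTb : T ≤ b) {W : Set X} (hW : W ∈ 𝓝 (p x₀))
    {I : Type*} [TopologicalSpace I] (e : Trivialization I p)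
    (hmaps : MapsTo Φ (Icc T b ×ˢ W) e.baseSet)
    {V F} (hV : V ∈ 𝓝 x₀) (hF : GoodLift p Φ T V F) :
    ∃ V' ∈ 𝓝 x₀, ∃ F', GoodLift p Φ b V' F' := by
  classical
  set V' : Set Xt := V ∩ p ⁻¹' W with hV'def
  have hV' : V' ∈ 𝓝 x₀ := inter_mem hV ((hp.continuous.continuousAt).preimage_mem_nhds hW)
  set G : ℝ≥0 × Xt → Xt :=
    fun q => e.toPartialHomeomorph.symm (Φ (q.1, p q.2), (e (F (T, q.2))).2) with hGdef
  set F' : ℝ≥0 × Xt → Xt := fun q => if q.1 ≤ T then F q else G q with hF'def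
  -- basic facts
  have hbase : ∀ q : ℝ≥0 × Xt, q ∈ Icc T b ×ˢ V' → Φ (q.1, p q.2) ∈ e.baseSet :=
    fun q hq => hmaps (mk_mem_prod hq.1 hq.2.2)
  have hsrc : MapsTo (fun x => F (T, x)) V' e.source := by
    intro x hx
    show F (T, x) ∈ e.source
    rw [e.mem_source]
    have : p (F (T, x)) = Φ (T, p x) :=
      hF.2.2 (T, x) (mk_mem_prod ⟨zero_le, le_rfl⟩ hx.1)
    rw [this]
    exact hbase (T, x) (mk_mem_prod ⟨le_rfl, hTb⟩ hx)
  have hGT : ∀ x ∈ V', G (T, x) = F (T, x) := by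
    intro x hx
    have h1 : p (F (T, x)) = Φ (T, p x) :=
      hF.2.2 (T, x) (mk_mem_prod ⟨zero_le, le_rfl⟩ hx.1)
    have := e.symm_apply_mk_proj (hsrc hx)
    rwa [h1] at this
  have hpG : ∀ q ∈ Icc T b ×ˢ V', p (G q) = Φ (q.1, p q.2) := by
    intro q hq
    exact e.proj_symm_apply (e.mem_target.2 (hbase q hq))
  -- continuity of G on Icc T b ×ˢ V'
  have hGc : ContinuousOn G (Icc T b ×ˢ V') := by
    have hFT : ContinuousOn (fun x : Xt => F (T, x)) V' := by
      have : ContinuousOn (fun x : Xt => F (T, x)) V :=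
        hF.1.comp (Continuous.continuousOn (continuous_const.prodMk continuous_id))
          (fun x hx => mk_mem_prod ⟨zero_le, le_rfl⟩ hx)
      exact this.mono inter_subset_left
    have he1 : ContinuousOn (fun x : Xt => e (F (T, x))) V' := by
      have := e.toPartialHomeomorph.continuousOn.comp hFT hsrc
      exact this
    have hsnd : ContinuousOn (fun x : Xt => (e (F (T, x))).2) V' :=
      continuous_snd.comp_continuousOn he1
    have hinner : ContinuousOn
        (fun q : ℝ≥0 × Xt => (Φ (q.1, p q.2), (e (F (T, q.2))).2)) (Icc T b ×ˢ V') := by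
      apply ContinuousOn.prodMk
      · exact (hΦc.comp (continuous_fst.prodMk
          (hp.continuous.comp continuous_snd))).continuousOn
      · exact hsnd.comp continuous_snd.continuousOn (fun q hq => hq.2)
    refine e.toPartialHomeomorph.continuousOn_symm.comp hinner ?_
    intro q hq
    exact e.mem_target.2 (hbase q hq)
  -- F' agrees with F on the left part and G on the right part
  have heqF : EqOn F' F (Icc 0 T ×ˢ V') := fun q hq => if_pos hq.1.2
  have heqG : EqOn F' G (Icc T b ×ˢ V') := by
    intro q hq
    by_cases h : q.1 ≤ T
    · have hqT : q.1 = T := le_antisymm h hq.1.1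
      have : q = (T, q.2) := Prod.ext hqT rfl
      rw [hF'def]
      simp only [if_pos h]
      rw [this, hGT q.2 hq.2]
    · exact if_neg h
  have hunion : Icc (0:ℝ≥0) b ×ˢ V' = (Icc 0 T ×ˢ V') ∪ (Icc T b ×ˢ V') := by
    rw [← union_prod, Icc_union_Icc_eq_Icc (zero_le) hTb]
  refine ⟨V', hV', F', ?_, ?_, ?_⟩
  · -- continuity
    rw [hunion]
    intro q hq
    rw [continuousWithinAt_union]
    have hFc' : ContinuousOn F' (Icc 0 T ×ˢ V') :=
      ((hF.1.mono (prod_mono_right inter_subset_left)).congr heqF)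
    have hGc' : ContinuousOn F' (Icc T b ×ˢ V') := hGc.congr heqG
    constructor
    · by_cases h : q ∈ Icc (0:ℝ≥0) T ×ˢ V'
      · exact hFc' q h
      · apply continuousWithinAt_of_notMem_closure
        intro hcl
        apply h
        have hcl2 : q ∈ closure (Icc (0:ℝ≥0) T ×ˢ (univ : Set Xt)) :=
          closure_mono (prod_mono_right (subset_univ _)) hcl
        rw [IsClosed.closure_eq (isClosed_Icc.prod isClosed_univ)] at hcl2
        rcases hq with hq | hq
        · exact hq
        · exact ⟨hcl2.1, hq.2⟩
    · by_cases h : q ∈ Icc T b ×ˢ V'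
      · exact hGc' q h
      · apply continuousWithinAt_of_notMem_closure
        intro hcl
        apply h
        have hcl2 : q ∈ closure (Icc T b ×ˢ (univ : Set Xt)) :=
          closure_mono (prod_mono_right (subset_univ _)) hcl
        rw [IsClosed.closure_eq (isClosed_Icc.prod isClosed_univ)] at hcl2
        rcases hq with hq | hq
        · exact ⟨hcl2.1, hq.2⟩
        · exact hq
  · intro x hx
    have : F' (0, x) = F (0, x) := if_pos (zero_le)
    rw [this, hF.2.1 x hx.1]
  · intro q hq
    rw [hunion] at hq
    rcases hq with hq | hq
    · rw [heqF hq]; exact hF.2.2 q (mem_of_mem_of_subset hq (prod_mono_right inter_subset_left))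
    · rw [heqG hq]; exact hpG q hq

lemma icc_nhds {u : Set ℝ≥0} {a : ℝ≥0} (hu : u ∈ 𝓝 a) :
    ∃ δ : ℝ≥0, 0 < δ ∧ Icc (a - δ) (a + δ) ⊆ u := by
  rcases Metric.mem_nhds_iff.1 hu with ⟨ε, hε, hball⟩
  have hεpos : 0 < ε.toNNReal := Real.toNNReal_pos.2 hε
  refine ⟨ε.toNNReal / 2, div_pos hεpos (by norm_num), fun x hx => ?_⟩
  apply hball
  rw [Metric.mem_ball, NNReal.dist_eq]
  rw [abs_sub_lt_iff]
  have h1 : (x : ℝ) ≤ a + ε.toNNReal / 2 := by exact_mod_cast hx.2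
  have h2 : (a : ℝ) ≤ x + ε.toNNReal / 2 := by
    have := tsub_le_iff_right.1 hx.1
    exact_mod_cast this
  have h3 : ((ε.toNNReal / 2 : ℝ≥0) : ℝ) < ε := by
    push_cast
    rw [Real.coe_toNNReal ε hε.le]
    linarith
  constructor <;> push_cast at * <;> linarith

/-- Existence of good lifts for all times. -/
lemma exists_goodLift (hp : IsCoveringMap p) (hΦc : Continuous Φ)
    (hΦ0 : ∀ x, Φ (0, x) = x) (x₀ : Xt) (T : ℝ≥0) :
    ∃ V ∈ 𝓝 x₀, ∃ F, GoodLift p Φ T V F := by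
  set S : Set ℝ≥0 := {T | ∃ V ∈ 𝓝 x₀, ∃ F, GoodLift p Φ T V F} with hSdef
  have h0 : (0 : ℝ≥0) ∈ S := ⟨univ, univ_mem, _, goodLift_zero hΦ0 univ⟩
  have hdc : ∀ t₁ t₂ : ℝ≥0, t₁ ≤ t₂ → t₂ ∈ S → t₁ ∈ S := by
    rintro t₁ t₂ h ⟨V, hV, F, hF⟩
    exact ⟨V, hV, F, hF.mono h⟩
  -- neighborhood data around any time a
  have hnbhd : ∀ a : ℝ≥0, Nonempty (p ⁻¹' {Φ (a, p x₀)}) → ∃ δ : ℝ≥0, 0 < δ ∧ ∃ W ∈ 𝓝 (p x₀),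
      ∃ e : Trivialization (p ⁻¹' {Φ (a, p x₀)}) p,
        MapsTo Φ (Icc (a - δ) (a + δ) ×ˢ W) e.baseSet := by
    intro a hne'
    obtain ⟨hd, e, he⟩ := (hp (Φ (a, p x₀)))
    have he' := IsEvenlyCovered.mem_toTrivialization_baseSet ⟨hd, e, he⟩
    set e' := IsEvenlyCovered.toTrivialization (f := p) ⟨hd, e, he⟩
    have hopen : Φ ⁻¹' e'.baseSet ∈ 𝓝 (a, p x₀) :=
      hΦc.continuousAt.preimage_mem_nhds (e'.open_baseSet.mem_nhds he')
    rw [mem_nhds_prod_iff] at hopen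
    obtain ⟨u, hu, W, hW, huW⟩ := hopen
    obtain ⟨δ, hδ, hIcc⟩ := icc_nhds hu
    exact ⟨δ, hδ, W, hW, e', fun q hq => huW (mk_mem_prod (hIcc hq.1) hq.2)⟩
  -- main argument
  by_contra hT
  have hne : (Sᶜ : Set ℝ≥0).Nonempty := ⟨T, hT⟩
  set c := sInf Sᶜ with hc
  have hlt : ∀ t, t < c → t ∈ S := by
    intro t ht
    by_contra h'
    exact absurd (csInf_le (OrderBot.bddBelow _) (mem_compl h')) (not_le.2 ht)
  have hnec : Nonempty (p ⁻¹' {Φ (c, p x₀)}) := by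
    obtain ⟨_, U, hU, hUo, _, H, _⟩ := hp (Φ (c, p x₀))
    have hopen : Φ ⁻¹' U ∈ 𝓝 (c, p x₀) :=
      hΦc.continuousAt.preimage_mem_nhds (hUo.mem_nhds hU)
    rw [mem_nhds_prod_iff] at hopen
    obtain ⟨u, hu, W', hW', huW⟩ := hopen
    obtain ⟨δ', hδ', hIcc⟩ := icc_nhds hu
    have htS : c - δ' ∈ S := by
      rcases eq_zero_or_pos c with h | h
      · rw [h, zero_tsub]; exact h0
      · exact hlt _ (tsub_lt_self h hδ')
    obtain ⟨V, hV, F, hF⟩ := htS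
    have hmem : F (c - δ', x₀) ∈ p ⁻¹' U := by
      show p (F (c - δ', x₀)) ∈ U
      rw [hF.2.2 (c - δ', x₀) (mk_mem_prod ⟨zero_le, le_rfl⟩ (mem_of_mem_nhds hV))]
      exact huW (mk_mem_prod (hIcc ⟨le_rfl, tsub_le_self.trans le_self_add⟩) (mem_of_mem_nhds hW'))
    exact ⟨(H ⟨_, hmem⟩).2⟩
  obtain ⟨δ, hδ, W, hW, e, hmaps⟩ := hnbhd c hnec
  have hcS : c ∈ S := by
    rcases eq_zero_or_pos c with h | h
    · rw [h]; exact h0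
    · set ε := min δ c with hε
      have hεpos : 0 < ε := lt_min hδ h
      have hε2 : 0 < ε / 2 := by positivity
      set T' := c - ε / 2 with hT'
      have hT'lt : T' < c := tsub_lt_self h hε2
      obtain ⟨V, hV, F, hF⟩ := hlt T' hT'lt
      have hsub : Icc T' c ⊆ Icc (c - δ) (c + δ) := by
        apply Icc_subset_Icc
        · exact tsub_le_tsub_left (le_trans (le_trans (half_le_self (zero_le)) (min_le_left _ _)) le_rfl) c
        · exact le_add_right le_rfl
      have hmaps' : MapsTo Φ (Icc T' c ×ˢ W) e.baseSet :=
        fun q hq => hmaps (mk_mem_prod (hsub hq.1) hq.2)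
      exact goodLift_extend hp hΦc hT'lt.le hW e hmaps' hV hF
  obtain ⟨V, hV, F, hF⟩ := hcS
  have hmaps2 : MapsTo Φ (Icc c (c + δ) ×ˢ W) e.baseSet :=
    fun q hq => hmaps (mk_mem_prod (Icc_subset_Icc tsub_le_self le_rfl hq.1) hq.2)
  have hcδ : c + δ ∈ S := goodLift_extend hp hΦc (le_add_right le_rfl) hW e hmaps2 hV hF
  have : c + δ ≤ c := by
    rw [hc]
    apply le_csInf hne
    intro u hu
    by_contra h'
    exact hu (hdc u (c + δ) (not_le.1 h').le hcδ)
  exact absurd this (by simpa using hδ.not_ge)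

end Stmt9Aux

open Stmt9Aux in
theorem stmt_9 {X Xt : Type*} [TopologicalSpace X] [TopologicalSpace Xt]
    (p : Xt → X) (hp : IsCoveringMap p)
    (Φ : ℝ≥0 × X → X) (hΦc : Continuous Φ)
    (hΦ0 : ∀ x, Φ (0, x) = x)
    (hΦadd : ∀ (s t : ℝ≥0) (x : X), Φ (s + t, x) = Φ (s, Φ (t, x))) :
    ∃ Φt : ℝ≥0 × Xt → Xt, Continuous Φt ∧ (∀ a, Φt (0, a) = a) ∧
      ∀ (t : ℝ≥0) (a : Xt), p (Φt (t, a)) = Φ (t, p a) := by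
  classical
  have key := fun (a : Xt) (T : ℝ≥0) => exists_goodLift hp hΦc hΦ0 a T
  choose V hV F hF using key
  have hVm : ∀ (a : Xt) (T : ℝ≥0), a ∈ V a T := fun a T => mem_of_mem_nhds (hV a T)
  -- uniqueness of lifts in the time variable
  have uniq : ∀ (a : Xt) (T₁ T₂ : ℝ≥0) (V₁ V₂ : Set Xt) (F₁ F₂ : ℝ≥0 × Xt → Xt),
      GoodLift p Φ T₁ V₁ F₁ → GoodLift p Φ T₂ V₂ F₂ → a ∈ V₁ → a ∈ V₂ →
      ∀ t, t ≤ T₁ → t ≤ T₂ → F₁ (t, a) = F₂ (t, a) := by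
    intro a T₁ T₂ V₁ V₂ F₁ F₂ h₁ h₂ ha₁ ha₂ t ht₁ ht₂
    set s : Set ℝ≥0 := Icc 0 (min T₁ T₂) with hs
    have hsub₁ : MapsTo (fun t : ℝ≥0 => (t, a)) s (Icc 0 T₁ ×ˢ V₁) :=
      fun u hu => Set.mk_mem_prod ⟨hu.1, hu.2.trans (min_le_left _ _)⟩ ha₁
    have hsub₂ : MapsTo (fun t : ℝ≥0 => (t, a)) s (Icc 0 T₂ ×ˢ V₂) :=
      fun u hu => Set.mk_mem_prod ⟨hu.1, hu.2.trans (min_le_right _ _)⟩ ha₂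
    have hc₁ : ContinuousOn (fun t : ℝ≥0 => F₁ (t, a)) s :=
      h₁.1.comp (Continuous.continuousOn (continuous_id.prodMk continuous_const)) hsub₁
    have hc₂ : ContinuousOn (fun t : ℝ≥0 => F₂ (t, a)) s :=
      h₂.1.comp (Continuous.continuousOn (continuous_id.prodMk continuous_const)) hsub₂
    have heq : Set.EqOn (p ∘ fun t : ℝ≥0 => F₁ (t, a)) (p ∘ fun t : ℝ≥0 => F₂ (t, a)) s := by
      intro u hu
      have e₁ := h₁.2.2 (u, a) (hsub₁ hu)
      have e₂ := h₂.2.2 (u, a) (hsub₂ hu)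
      simp only [Function.comp]
      rw [e₁, e₂]
    have h0s : (0 : ℝ≥0) ∈ s := ⟨le_rfl, zero_le⟩
    have h00 : F₁ (0, a) = F₂ (0, a) := by rw [h₁.2.1 a ha₁, h₂.2.1 a ha₂]
    have := hp.eqOn_of_comp_eqOn isPreconnected_Icc hc₁ hc₂ heq h0s h00
    exact this ⟨zero_le, le_min ht₁ ht₂⟩
  refine ⟨fun q => F q.2 q.1 q, ?_, ?_, ?_⟩
  · rw [continuous_iff_continuousAt]
    rintro ⟨t₀, a₀⟩
    set T := t₀ + 1 with hT
    set N : Set (ℝ≥0 × Xt) := Icc 0 T ×ˢ V a₀ T with hN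
    have hNmem : N ∈ 𝓝 (t₀, a₀) := by
      apply prod_mem_nhds _ (hV a₀ T)
      exact mem_of_superset (Iic_mem_nhds (lt_add_of_pos_right t₀ one_pos))
        (fun u hu => ⟨zero_le, hu⟩)
    have hGat : ContinuousAt (F a₀ T) (t₀, a₀) := (hF a₀ T).1.continuousAt hNmem
    apply hGat.congr
    apply eventuallyEq_of_mem hNmem
    rintro ⟨t, a⟩ ht
    exact uniq a T t (V a₀ T) (V a t) (F a₀ T) (F a t) (hF a₀ T) (hF a t)
      ht.2 (hVm a t) t ht.1.2 le_rfl
  · intro a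
    exact (hF a 0).2.1 a (hVm a 0)
  · intro t a
    exact (hF a t).2.2 (t, a) (Set.mk_mem_prod ⟨zero_le, le_rfl⟩ (hVm a t))
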